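/- Let V be a 6-dimensional real inner product space with compatible complex structure J (J² = -1, ⟨Jx, Jy⟩ = ⟨x,y⟩) and associated 2-form ω(x,y) = ⟨Jx, y⟩. Let e₁,...,e₆ be an orthonormal basis with Je₁ = e₂, Je₃ = e₄, Je₅ = e₆, so ω = e¹∧e² + e³∧e⁴ + e⁵∧e⁶, and let φ = (r/2)(e¹∧e³∧e⁵ - e¹∧e⁴∧e⁶ - e²∧e⁴∧e⁵ - e²∧e³∧e⁶) for a constant r > 0. Then the bilinear identity ω^{ij} φ_{iab} φ_{jcd} = (r²/4)(ω_{ac} g_{bd} - ω_{bc} g_{ad} - ω_{ad} g_{bc} + ω_{bd} g_{ac}) holds, where ω^{ij} is the inverse of ω_{ij} and indices refer to the basis (e_i). -/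

import Mathlib

open scoped BigOperators

/-- Components of the basis 3-form `e^p ∧ e^q ∧ e^s` evaluated on `(e_i, e_j, e_k)`. -/
noncomputable def eps3 (p q s i j k : Fin 6) : ℝ :=
  Matrix.det (Matrix.of fun a b : Fin 3 => if ![p, q, s] a = ![i, j, k] b then (1 : ℝ) else 0)

/-- Components of `φ = (r/2)(e¹³⁵ - e¹⁴⁶ - e²⁴⁵ - e²³⁶)` (0-indexed). -/
noncomputable def phiIIA (r : ℝ) (i j k : Fin 6) : ℝ :=
  (r / 2) * (eps3 0 2 4 i j k - eps3 0 3 5 i j k - eps3 1 3 4 i j k - eps3 1 2 5 i j k)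

/-- Components of `ω = e¹∧e² + e³∧e⁴ + e⁵∧e⁶` in the orthonormal basis. -/
def omegaStd : Matrix (Fin 6) (Fin 6) ℝ :=
  !![0,1,0,0,0,0; -1,0,0,0,0,0; 0,0,0,1,0,0; 0,0,-1,0,0,0; 0,0,0,0,0,1; 0,0,0,0,-1,0]

/-- Components of the metric `g` in the orthonormal basis. -/
def gStd : Matrix (Fin 6) (Fin 6) ℝ := 1

/-- Kronecker delta over ℤ. -/
def dZ (x y : Fin 6) : ℤ := if x = y then 1 else 0

/-- Integer version of `eps3`. -/
def eps3Z (p q s i j k : Fin 6) : ℤ :=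
  dZ p i * dZ q j * dZ s k - dZ p i * dZ q k * dZ s j - dZ p j * dZ q i * dZ s k
    + dZ p j * dZ q k * dZ s i + dZ p k * dZ q i * dZ s j - dZ p k * dZ q j * dZ s i

/-- Integer components of `2φ/r`. -/
def cIntZ (i j k : Fin 6) : ℤ :=
  eps3Z 0 2 4 i j k - eps3Z 0 3 5 i j k - eps3Z 1 3 4 i j k - eps3Z 1 2 5 i j k

/-- Integer version of `omegaStd`. -/
def omZ : Matrix (Fin 6) (Fin 6) ℤ :=
  !![0,1,0,0,0,0; -1,0,0,0,0,0; 0,0,0,1,0,0; 0,0,-1,0,0,0; 0,0,0,0,0,1; 0,0,0,0,-1,0]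

/-- Integer version of `gStd`. -/
def gZ (x y : Fin 6) : ℤ := if x = y then 1 else 0

lemma eps3_cast (p q s i j k : Fin 6) : eps3 p q s i j k = ((eps3Z p q s i j k : ℤ) : ℝ) := by
  simp only [eps3, eps3Z, dZ, Matrix.det_fin_three, Matrix.of_apply, Matrix.cons_val',
    Matrix.cons_val_zero, Matrix.cons_val_one, Matrix.head_cons, Matrix.cons_val_two,
    Matrix.tail_cons, Matrix.empty_val', Matrix.cons_val_fin_one, Matrix.head_fin_const]
  push_cast [apply_ite (fun x : ℤ => (x : ℝ))]
  congr! 0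

lemma phi_cast (r : ℝ) (i j k : Fin 6) : phiIIA r i j k = r / 2 * ((cIntZ i j k : ℤ) : ℝ) := by
  rw [phiIIA, cIntZ, eps3_cast, eps3_cast, eps3_cast, eps3_cast]
  push_cast
  ring

lemma hom_cast : ∀ i j : Fin 6, omegaStd i j = ((omZ i j : ℤ) : ℝ) := by
  intro i j; fin_cases i <;> fin_cases j <;> norm_num [omegaStd, omZ]

lemma hg_cast : ∀ i j : Fin 6, gStd i j = ((gZ i j : ℤ) : ℝ) := by
  intro i j
  simp [gStd, gZ, Matrix.one_apply, apply_ite (fun x : ℤ => (x : ℝ))]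

set_option maxHeartbeats 2000000 in
lemma keyZ : ∀ a b c d : Fin 6,
    (∑ i : Fin 6, ∑ j : Fin 6, (-omZ i j) * cIntZ i a b * cIntZ j c d)
      = omZ a c * gZ b d - omZ b c * gZ a d - omZ a d * gZ b c + omZ b d * gZ a c := by
  decide

set_option maxHeartbeats 1000000 in
lemma hL : (-omegaStd) * omegaStd = 1 := by
  have hZ : (-omZ) * omZ = 1 := by decide
  ext i j
  have hij := congrFun (congrFun hZ i) j
  simp only [Matrix.mul_apply, Matrix.neg_apply, Matrix.one_apply] at hij ⊢
  have h2 : (∑ k, -omegaStd i k * omegaStd k j) = ((∑ k, -omZ i k * omZ k j : ℤ) : ℝ) := by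
    push_cast
    exact Finset.sum_congr rfl fun k _ => by rw [hom_cast, hom_cast]
  rw [h2, hij]
  simp [apply_ite (fun x : ℤ => (x : ℝ))]

/-- The fundamental bilinear identity
`ω^{ij} φ_{iab} φ_{jcd} = (r²/4)(ω_{ac} g_{bd} - ω_{bc} g_{ad} - ω_{ad} g_{bc} + ω_{bd} g_{ac})`
for a Type IIA structure in normal form, `r = |φ| > 0`. -/
theorem typeIIA_bilinear_identity
    (r : ℝ) (hr : 0 < r)
    (ωInv : Matrix (Fin 6) (Fin 6) ℝ) (hinv : omegaStd * ωInv = 1)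
    (a b c d : Fin 6) :
    (∑ i : Fin 6, ∑ j : Fin 6, ωInv i j * phiIIA r i a b * phiIIA r j c d)
      = r ^ 2 / 4 * (omegaStd a c * gStd b d - omegaStd b c * gStd a d
          - omegaStd a d * gStd b c + omegaStd b d * gStd a c) := by
  have hInvEq : ωInv = -omegaStd := by
    calc ωInv = 1 * ωInv := (one_mul _).symm
      _ = ((-omegaStd) * omegaStd) * ωInv := by rw [hL]
      _ = (-omegaStd) * (omegaStd * ωInv) := Matrix.mul_assoc _ _ _
      _ = -omegaStd := by rw [hinv, Matrix.mul_one]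
  subst hInvEq
  have step : (∑ i : Fin 6, ∑ j : Fin 6, (-omegaStd) i j * phiIIA r i a b * phiIIA r j c d)
      = r ^ 2 / 4 *
        (((∑ i : Fin 6, ∑ j : Fin 6, (-omZ i j) * cIntZ i a b * cIntZ j c d : ℤ)) : ℝ) := by
    push_cast
    rw [Finset.mul_sum]
    refine Finset.sum_congr rfl fun i _ => ?_
    rw [Finset.mul_sum]
    refine Finset.sum_congr rfl fun j _ => ?_
    simp only [Matrix.neg_apply, phi_cast, hom_cast]
    ring
  rw [step, keyZ a b c d]
  push_cast
  rw [hom_cast a c, hom_cast b c, hom_cast a d, hom_cast b d,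
    hg_cast b d, hg_cast a d, hg_cast b c, hg_cast a c]
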